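/- Suppose P_L > 1/2 and B ≤ B_PA. Then there exists exactly one c* ∈ (0, c_max] satisfying the PA equilibrium equation 2·(P_H − P_L)·F(c*) + 2·P_L − 1 = c*/(B·(P_H − P_L)). -/

import Mathlib

open Set

private lemma pa_no_two_solutions
    (c_max P_L P_H B : ℝ) (F : ℝ → ℝ)
    (hF0 : F 0 = 0)
    (hFconc : StrictConcaveOn ℝ (Icc 0 c_max) F)
    (hPL : 1 / 2 < P_L) (hPLH : P_L < P_H)
    (hBpos : 0 < B)
    {a b : ℝ} (ha : a ∈ Ioc 0 c_max) (hb : b ∈ Ioc 0 c_max) (hab : a < b)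
    (hea : 2 * (P_H - P_L) * F a + 2 * P_L - 1 = a / (B * (P_H - P_L)))
    (heb : 2 * (P_H - P_L) * F b + 2 * P_L - 1 = b / (B * (P_H - P_L))) : False := by
  have hD : 0 < B * (P_H - P_L) := mul_pos hBpos (by linarith)
  set s : ℝ := a / b with hs_def
  have hb0 : 0 < b := hb.1
  have hs0 : 0 < s := div_pos ha.1 hb0
  have hs1 : s < 1 := (div_lt_one hb0).mpr hab
  have hsb : s * b = a := div_mul_cancel₀ a hb0.ne'
  have h0mem : (0 : ℝ) ∈ Icc 0 c_max := ⟨le_rfl, le_of_lt (lt_of_lt_of_le hb0 hb.2)⟩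
  have hbmem : b ∈ Icc 0 c_max := ⟨hb0.le, hb.2⟩
  have hne : (0 : ℝ) ≠ b := hb0.ne
  have hconc := hFconc.2 h0mem hbmem hne (by linarith : (0:ℝ) < 1 - s) hs0 (by ring)
  have hFa : s * F b < F a := by
    have : (1 - s) • (0:ℝ) + s • b = a := by simp [smul_eq_mul, hsb]
    rw [this] at hconc
    simpa [hF0, smul_eq_mul] using hconc
  -- clear denominators
  have ea : 2 * (P_H - P_L) * F a + 2 * P_L - 1 = a / (B * (P_H - P_L)) := hea
  have ea' : (2 * (P_H - P_L) * F a + 2 * P_L - 1) * (B * (P_H - P_L)) = a := by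
    rw [hea]; exact div_mul_cancel₀ a hD.ne'
  have eb' : (2 * (P_H - P_L) * F b + 2 * P_L - 1) * (B * (P_H - P_L)) = b := by
    rw [heb]; exact div_mul_cancel₀ b hD.ne'
  -- a = s * b gives the contradiction
  have key : (2 * (P_H - P_L) * F a + 2 * P_L - 1) = s * (2 * (P_H - P_L) * F b + 2 * P_L - 1) := by
    have := hsb
    nlinarith [ea', eb', hD]
  nlinarith [mul_pos hs0 hb0, hFa, hs1, hPL, hPLH]

/-- When `P_L > 1/2` and `B ≤ B_PA`, the PA equilibrium equation has a unique solution
`c* ∈ (0, c_max]`. -/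
theorem pa_unique_equilibrium_threshold
    (c_max P_L P_H B : ℝ) (F : ℝ → ℝ)
    (hcmax : 0 < c_max)
    (hFcont : ContinuousOn F (Icc 0 c_max))
    (hFmono : MonotoneOn F (Icc 0 c_max))
    (hF0 : F 0 = 0) (hFmax : F c_max = 1)
    (hFconc : StrictConcaveOn ℝ (Icc 0 c_max) F)
    (hPL : 1 / 2 < P_L) (hPLH : P_L < P_H) (hPH : P_H ≤ 1)
    (hBpos : 0 < B)
    (hB : B ≤ c_max / ((2 * P_H - 1) * (P_H - P_L))) :
    ∃! c : ℝ, c ∈ Ioc 0 c_max ∧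
      2 * (P_H - P_L) * F c + 2 * P_L - 1 = c / (B * (P_H - P_L)) := by
  have hD : 0 < B * (P_H - P_L) := mul_pos hBpos (by linarith)
  have hQ : 0 < (2 * P_H - 1) * (P_H - P_L) := mul_pos (by linarith) (by linarith)
  have hBQ : B * ((2 * P_H - 1) * (P_H - P_L)) ≤ c_max := (le_div_iff₀ hQ).mp hB
  have hend : 2 * P_H - 1 ≤ c_max / (B * (P_H - P_L)) := by
    rw [le_div_iff₀ hD]; nlinarith
  set g : ℝ → ℝ := fun x => 2 * (P_H - P_L) * F x + 2 * P_L - 1 - x / (B * (P_H - P_L)) with hg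
  have hgcont : ContinuousOn g (Icc 0 c_max) := by
    exact (((continuousOn_const.mul hFcont).add continuousOn_const).sub
      continuousOn_const).sub (continuousOn_id.div_const _)
  have hg0 : 0 < g 0 := by simp [hg, hF0]; linarith
  have hgmax : g c_max ≤ 0 := by simp only [hg, hFmax]; linarith
  have hex : ∃ c, c ∈ Ioc 0 c_max ∧
      2 * (P_H - P_L) * F c + 2 * P_L - 1 = c / (B * (P_H - P_L)) := by
    rcases eq_or_lt_of_le hgmax with h | h
    · exact ⟨c_max, ⟨hcmax, le_rfl⟩, by simp only [hg] at h; linarith⟩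
    · have : (0:ℝ) ∈ Ioo (g c_max) (g 0) := ⟨h, hg0⟩
      have := intermediate_value_Ioo' (le_of_lt hcmax) hgcont this
      obtain ⟨c, hc, hgc⟩ := this
      exact ⟨c, ⟨hc.1, hc.2.le⟩, by simp only [hg] at hgc; linarith⟩
  obtain ⟨c, hc, heq⟩ := hex
  refine ⟨c, ⟨hc, heq⟩, ?_⟩
  rintro y ⟨hy, heqy⟩
  rcases lt_trichotomy y c with h | h | h
  · exact absurd (pa_no_two_solutions c_max P_L P_H B F hF0 hFconc hPL hPLH hBpos hy hc h heqy heq) not_false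
  · exact h
  · exact absurd (pa_no_two_solutions c_max P_L P_H B F hF0 hFconc hPL hPLH hBpos hc hy h heq heqy) not_false
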